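/- Let ν ∈ (0,1], let S ⊆ ℝⁿ be a nonempty convex set, and let h : ℝⁿ → ℝ be continuous on S. If there exists ρ ≥ 0 such that h((x+y)/2) ≤ (1/2)h(x) + (1/2)h(y) + (ρ/2)‖x−y‖^{1+ν} for all x, y ∈ S (midpoint ν-paraconvexity), then h(λx+(1−λ)y) ≤ λh(x) + (1−λ)h(y) + ρ‖x−y‖^{1+ν} for all x, y ∈ S and λ ∈ [0,1]; in particular, h is ν-paraconvex on S. -/
import Mathlib


/-- A continuous midpoint `ν`-paraconvex function on a nonempty convex
set `S` satisfies the full `ν`-paraconvexity inequality (without the `min` factor) with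
the same constant `ρ`; in particular it is `ν`-paraconvex on `S`. -/
theorem paraconvex_of_midpoint {n : ℕ} (ν ρ : ℝ)
    (hν : ν ∈ Set.Ioc (0 : ℝ) 1) (hρ : 0 ≤ ρ)
    (S : Set (EuclideanSpace ℝ (Fin n))) (hSne : S.Nonempty) (hScv : Convex ℝ S)
    (h : EuclideanSpace ℝ (Fin n) → ℝ) (hcont : ContinuousOn h S)
    (hmid : ∀ x ∈ S, ∀ y ∈ S,
        h ((1 / 2 : ℝ) • (x + y)) ≤
          (1 / 2) * h x + (1 / 2) * h y + (ρ / 2) * ‖x - y‖ ^ (1 + ν)) :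
    ∀ x ∈ S, ∀ y ∈ S, ∀ t ∈ Set.Icc (0 : ℝ) 1,
      h (t • x + (1 - t) • y) ≤
        t * h x + (1 - t) * h y + ρ * ‖x - y‖ ^ (1 + ν) := by
  intro x hx y hy
  have hν0 : (0 : ℝ) < ν := hν.1
  have hE : (0 : ℝ) ≤ 1 + ν := by linarith
  obtain ⟨C, hC⟩ : ∃ C : ℝ, C = ρ * ‖x - y‖ ^ (1 + ν) := ⟨_, rfl⟩
  have hCnn : 0 ≤ C := hC ▸ mul_nonneg hρ (Real.rpow_nonneg (norm_nonneg _) _)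
  obtain ⟨γ, hγ⟩ : ∃ γ : ℝ → EuclideanSpace ℝ (Fin n),
      γ = fun t => t • x + (1 - t) • y := ⟨_, rfl⟩
  have hγS : ∀ t ∈ Set.Icc (0 : ℝ) 1, γ t ∈ S := by
    intro t ht
    rw [hγ]
    exact hScv hx hy ht.1 (by linarith [ht.2]) (by ring)
  obtain ⟨ψ, hψ⟩ : ∃ ψ : ℝ → ℝ,
      ψ = fun t => h (γ t) - (t * h x + (1 - t) * h y) := ⟨_, rfl⟩
  -- midpoint inequality for ψ
  have key : ∀ a ∈ Set.Icc (0 : ℝ) 1, ∀ b ∈ Set.Icc (0 : ℝ) 1,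
      ψ ((a + b) / 2) ≤ (ψ a + ψ b) / 2 + (C / 2) * |a - b| ^ (1 + ν) := by
    intro a ha b hb
    have hm := hmid (γ a) (hγS a ha) (γ b) (hγS b hb)
    have h1 : (1 / 2 : ℝ) • (γ a + γ b) = γ ((a + b) / 2) := by
      simp only [hγ]; module
    have h2 : γ a - γ b = (a - b) • (x - y) := by
      simp only [hγ]; module
    have h3 : ‖γ a - γ b‖ ^ (1 + ν) = |a - b| ^ (1 + ν) * ‖x - y‖ ^ (1 + ν) := by
      rw [h2, norm_smul, Real.norm_eq_abs,
        Real.mul_rpow (abs_nonneg _) (norm_nonneg _)]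
    rw [h1, h3] at hm
    have hAB : (C / 2) * |a - b| ^ (1 + ν)
        = (ρ / 2) * (|a - b| ^ (1 + ν) * ‖x - y‖ ^ (1 + ν)) := by
      rw [hC]; ring
    simp only [hψ, hC]
    simp only [hψ] at *
    linarith [hm, hAB.ge, hAB.le]
  -- continuity of ψ on [0,1]
  have hγc : Continuous γ := by
    rw [hγ]; fun_prop
  have hψc : ContinuousOn ψ (Set.Icc (0 : ℝ) 1) := by
    rw [hψ]
    apply ContinuousOn.sub
    · exact hcont.comp hγc.continuousOn hγS
    · fun_prop
  obtain ⟨t₀, ht₀, hmax⟩ :=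
    isCompact_Icc.exists_isMaxOn (Set.nonempty_Icc.2 zero_le_one) hψc
  have hMle : ∀ t ∈ Set.Icc (0 : ℝ) 1, ψ t ≤ ψ t₀ := fun t ht => hmax ht
  have hψ0 : ψ 0 = 0 := by simp [hψ, hγ]
  have hψ1 : ψ 1 = 0 := by simp [hψ, hγ]
  have hM0 : 0 ≤ ψ t₀ := hψ0 ▸ hMle 0 ⟨le_refl _, zero_le_one⟩
  -- the key bound M ≤ C
  have hMC : ψ t₀ ≤ C := by
    rcases le_or_gt t₀ (1 / 2) with hhalf | hhalf
    · have hb : (2 * t₀) ∈ Set.Icc (0 : ℝ) 1 :=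
        ⟨by linarith [ht₀.1], by linarith⟩
      have hk := key 0 ⟨le_refl _, zero_le_one⟩ (2 * t₀) hb
      have heq : (0 + 2 * t₀) / 2 = t₀ := by ring
      rw [heq, hψ0] at hk
      have habs : |0 - 2 * t₀| = 2 * t₀ := by
        rw [abs_of_nonpos (by linarith [ht₀.1])]; ring
      rw [habs] at hk
      have hA1 : (2 * t₀) ^ (1 + ν) ≤ 1 :=
        Real.rpow_le_one hb.1 hb.2 hE
      have hC2 : (C / 2) * (2 * t₀) ^ (1 + ν) ≤ (C / 2) * 1 :=
        mul_le_mul_of_nonneg_left hA1 (by linarith)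
      have hψb : ψ (2 * t₀) ≤ ψ t₀ := hMle _ hb
      linarith
    · have ha : (2 * t₀ - 1) ∈ Set.Icc (0 : ℝ) 1 :=
        ⟨by linarith, by linarith [ht₀.2]⟩
      have hk := key (2 * t₀ - 1) ha 1 ⟨zero_le_one, le_refl _⟩
      have heq : (2 * t₀ - 1 + 1) / 2 = t₀ := by ring
      rw [heq, hψ1] at hk
      have habs : |2 * t₀ - 1 - 1| = 2 - 2 * t₀ := by
        rw [abs_of_nonpos (by linarith [ht₀.2])]; ring
      rw [habs] at hk
      have hA1 : (2 - 2 * t₀) ^ (1 + ν) ≤ 1 :=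
        Real.rpow_le_one (by linarith [ht₀.2]) (by linarith) hE
      have hC2 : (C / 2) * (2 - 2 * t₀) ^ (1 + ν) ≤ (C / 2) * 1 :=
        mul_le_mul_of_nonneg_left hA1 (by linarith)
      have hψa : ψ (2 * t₀ - 1) ≤ ψ t₀ := hMle _ ha
      linarith
  intro t ht
  have h1 := hMle t ht
  rw [← hC]
  have h2 : ψ t = h (t • x + (1 - t) • y) - (t * h x + (1 - t) * h y) := by
    rw [hψ, hγ]
  linarith [h2.le, h2.ge]
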